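/- (Combinatorial form of Proposition 4.1 for GL_n: parameterisation of algebra homomorphisms out of the mod-p spherical Hecke algebra, identified via the Satake isomorphism with the monoid algebra on antidominant coweights.) Let k be a field and n ≥ 1. Let C = {λ ∈ ℤⁿ : λ_1 ≤ ⋯ ≤ λ_n}, an additive monoid, and let χ : C → k satisfy χ(0) = 1 and χ(λ + μ) = χ(λ)·χ(μ) for all λ, μ ∈ C. Then there exist a unique subset J ⊆ {1,…,n−1} and a unique group homomorphism c : L_J → kˣ, where L_J := {λ ∈ ℤⁿ : λ_i = λ_{i+1} for all i ∈ J}, such that χ(λ) = c(λ) for all λ ∈ C ∩ L_J, and χ(λ) = 0 for all λ ∈ C with λ ∉ L_J. -/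

import Mathlib

/-- `L_J = {λ ∈ ℤⁿ : λ_j = λ_{j+1} for all j ∈ J}` (0-indexed adjacent pairs). -/
def LJ (n : ℕ) (J : Finset ℕ) : Set (Fin n → ℤ) :=
  {lam | ∀ j j' : Fin n, (j : ℕ) ∈ J → (j' : ℕ) = (j : ℕ) + 1 → lam j = lam j'}

open Finset
section Aux
variable {k : Type*} [Field k] {n : ℕ}

def gg (n j : ℕ) : Fin n → ℤ := fun i => if j < (i : ℕ) then 1 else 0

def FF (n : ℕ) (hn : 1 ≤ n) (j : ℕ) : Fin n := ⟨min j (n-1), by omega⟩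

def DD (n : ℕ) (hn : 1 ≤ n) (lam : Fin n → ℤ) (j : ℕ) : ℤ :=
  lam (FF n hn (j+1)) - lam (FF n hn j)

lemma FF_eq (hn : 1 ≤ n) {j : ℕ} (h : j < n) : FF n hn j = ⟨j, h⟩ := by
  simp only [FF]; apply Fin.mk_eq_mk.mpr; omega

lemma FF_le (hn : 1 ≤ n) (j : ℕ) : FF n hn j ≤ FF n hn (j+1) := by
  simp only [FF, Fin.mk_le_mk]; omega

lemma DD_nonneg (hn : 1 ≤ n) {lam : Fin n → ℤ} (hlam : Monotone lam) (j : ℕ) :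
    0 ≤ DD n hn lam j :=
  sub_nonneg.mpr (hlam (FF_le hn j))

lemma gg_mono (n j : ℕ) : Monotone (gg n j) := by
  intro a b hab
  have : (a:ℕ) ≤ b := hab
  simp only [gg]
  split_ifs <;> omega

lemma mono_sum {s : Finset ℕ} {f : ℕ → Fin n → ℤ} (hf : ∀ j ∈ s, Monotone (f j)) :
    Monotone (∑ j ∈ s, f j) := by
  intro a b hab
  simp only [Finset.sum_apply]
  exact Finset.sum_le_sum fun j hj => hf j hj hab

lemma smul_mono {m : ℤ} (hm : 0 ≤ m) {v : Fin n → ℤ} (hv : Monotone v) :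
    Monotone (m • v) := by
  intro a b hab
  simp only [Pi.smul_apply, smul_eq_mul]
  exact mul_le_mul_of_nonneg_left (hv hab) hm

lemma chi_nsmul (χ : (Fin n → ℤ) → k) (h0 : χ 0 = 1)
    (hmul : ∀ lam mu : Fin n → ℤ, Monotone lam → Monotone mu →
      χ (lam + mu) = χ lam * χ mu)
    (t : ℕ) (v : Fin n → ℤ) (hv : Monotone v) :
    χ ((t : ℤ) • v) = χ v ^ t := by
  induction t with
  | zero => simpa using h0
  | succ t ih =>
      have h1 : ((t+1 : ℕ) : ℤ) • v = (t:ℤ) • v + v := by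
        push_cast; rw [add_smul, one_smul]
      rw [h1, hmul _ _ (smul_mono (by positivity) hv) hv, ih, pow_succ]

lemma chi_sum (χ : (Fin n → ℤ) → k) (h0 : χ 0 = 1)
    (hmul : ∀ lam mu : Fin n → ℤ, Monotone lam → Monotone mu →
      χ (lam + mu) = χ lam * χ mu)
    (N : ℕ) (m : ℕ → ℕ) (g : ℕ → Fin n → ℤ) (hg : ∀ j, Monotone (g j)) :
    χ (∑ j ∈ range N, (m j : ℤ) • g j) = ∏ j ∈ range N, χ (g j) ^ (m j) := by
  induction N with
  | zero => simpa using h0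
  | succ N ih =>
      rw [sum_range_succ, prod_range_succ,
        hmul _ _ (mono_sum fun j _ => smul_mono (by positivity) (hg j))
          (smul_mono (by positivity) (hg N)),
        ih, chi_nsmul χ h0 hmul _ _ (hg N)]

lemma decomp (hn : 1 ≤ n) (lam : Fin n → ℤ) :
    lam = (fun _ => lam (FF n hn 0)) +
      ∑ j ∈ range (n-1), (DD n hn lam j) • gg n j := by
  funext i
  have hi : (i:ℕ) ≤ n - 1 := by omega
  simp only [Pi.add_apply, Finset.sum_apply, Pi.smul_apply, gg, smul_eq_mul, mul_ite,
    mul_one, mul_zero]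
  have h1 : ∑ j ∈ range (n-1), (if j < (i:ℕ) then (DD n hn lam j) else 0)
      = ∑ j ∈ range (i:ℕ), (DD n hn lam j) := by
    rw [← Finset.sum_filter]
    congr 1
    ext j
    simp only [mem_filter, mem_range]
    omega
  rw [h1]
  unfold DD
  rw [Finset.sum_range_sub (fun j => lam (FF n hn j))]
  have h2 : FF n hn (i:ℕ) = i := by
    simp only [FF]; ext; simp; omega
  rw [h2]; ring

lemma mono_of_adj (hn : 1 ≤ n) (f : Fin n → ℤ)
    (h : ∀ m : ℕ, ∀ hm : m + 1 < n, f ⟨m, by omega⟩ ≤ f ⟨m+1, hm⟩) : Monotone f := by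
  have H : ∀ d m : ℕ, (hm : m + d < n) → f ⟨m, by omega⟩ ≤ f ⟨m + d, hm⟩ := by
    intro d
    induction d with
    | zero => intro m hm; exact le_of_eq (by congr 1)
    | succ d ih =>
        intro m hm
        refine le_trans (ih m (by omega)) ?_
        have h2 : (⟨m + (d+1), hm⟩ : Fin n) = ⟨(m+d)+1, by omega⟩ := by
          apply Fin.mk_eq_mk.mpr; omega
        rw [h2]
        exact h (m+d) (by omega)
  intro a b hab
  have hab' : (a:ℕ) ≤ b := hab
  have := H ((b:ℕ) - a) a (by omega)
  have e1 : (⟨(a:ℕ), by omega⟩ : Fin n) = a := by apply Fin.mk_eq_mk.mpr; rfl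
  have e2 : (⟨(a:ℕ) + ((b:ℕ) - a), by omega⟩ : Fin n) = b := by apply Fin.mk_eq_mk.mpr; omega
  rwa [e1, e2] at this

lemma chi_formula_of_zero (hn : 1 ≤ n) (χ : (Fin n → ℤ) → k) (h0 : χ 0 = 1)
    (hmul : ∀ lam mu : Fin n → ℤ, Monotone lam → Monotone mu →
      χ (lam + mu) = χ lam * χ mu)
    (lam : Fin n → ℤ) (hlam : Monotone lam) (hl0 : lam (FF n hn 0) = 0) :
    χ lam = ∏ j ∈ range (n-1), χ (gg n j) ^ (DD n hn lam j).toNat := by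
  conv_lhs => rw [decomp hn lam]
  rw [hl0]
  have hz : (fun _ : Fin n => (0:ℤ)) + ∑ j ∈ range (n-1), (DD n hn lam j) • gg n j
      = ∑ j ∈ range (n-1), (((DD n hn lam j).toNat : ℤ)) • gg n j := by
    rw [show (fun _ : Fin n => (0:ℤ)) = 0 from rfl, zero_add]
    refine Finset.sum_congr rfl fun j _ => ?_
    rw [Int.toNat_of_nonneg (DD_nonneg hn hlam j)]
  rw [hz, chi_sum χ h0 hmul _ _ _ (gg_mono n)]

lemma chi_formula (hn : 1 ≤ n) (χ : (Fin n → ℤ) → k) (h0 : χ 0 = 1)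
    (hmul : ∀ lam mu : Fin n → ℤ, Monotone lam → Monotone mu →
      χ (lam + mu) = χ lam * χ mu)
    (u : kˣ) (hu1 : (u : k) = χ (fun _ => 1))
    (lam : Fin n → ℤ) (hlam : Monotone lam) :
    χ lam = ((u ^ (lam (FF n hn 0)) : kˣ) : k) *
      ∏ j ∈ range (n-1), χ (gg n j) ^ (DD n hn lam j).toNat := by
  set z := lam (FF n hn 0) with hz
  set mu : Fin n → ℤ := lam + (fun _ => -z) with hmu
  have hmu_mono : Monotone mu := by
    intro a b hab
    simp only [hmu, Pi.add_apply]
    have := hlam hab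
    omega
  have hDmu : ∀ j, DD n hn mu j = DD n hn lam j := fun j => by
    simp [DD, hmu]
  have hmu0 : mu (FF n hn 0) = 0 := by simp [hmu, hz]
  have hP : χ mu = ∏ j ∈ range (n-1), χ (gg n j) ^ (DD n hn lam j).toNat := by
    rw [chi_formula_of_zero hn χ h0 hmul mu hmu_mono hmu0]
    exact prod_congr rfl fun j _ => by rw [hDmu]
  rcases le_or_gt 0 z with hzp | hzn
  · have hlam_eq : lam = ((z.toNat : ℤ)) • (fun _ => (1:ℤ)) + mu := by
      funext i
      simp only [hmu, Pi.add_apply, Pi.smul_apply, smul_eq_mul]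
      omega
    conv_lhs => rw [hlam_eq]
    rw [hmul _ _ (smul_mono (by positivity) monotone_const) hmu_mono,
      chi_nsmul χ h0 hmul _ _ monotone_const, hP, ← hu1]
    congr 1
    rw [← Int.toNat_of_nonneg hzp, zpow_natCast, Int.toNat_natCast]
    push_cast
    ring
  · set m := (-z).toNat with hm
    have hmz : (m : ℤ) = -z := by omega
    have hmu_eq : mu = ((m : ℤ)) • (fun _ => (1:ℤ)) + lam := by
      funext i
      simp only [hmu, Pi.add_apply, Pi.smul_apply, smul_eq_mul]
      omega
    have h1 : χ mu = χ (fun _ : Fin n => (1:ℤ)) ^ m * χ lam := by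
      rw [hmu_eq, hmul _ _ (smul_mono (by positivity) monotone_const) hlam,
        chi_nsmul χ h0 hmul _ _ monotone_const]
    have h2 : ((u ^ z : kˣ) : k) * (χ (fun _ : Fin n => (1:ℤ)) ^ m) = 1 := by
      rw [← hu1]
      have h3 : (u:k) ^ m = ((u ^ (m:ℤ) : kˣ) : k) := by
        rw [zpow_natCast]; push_cast; ring
      rw [h3, ← Units.val_mul, ← zpow_add, hmz]
      simp
    rw [← hP, h1, ← mul_assoc, h2, one_mul]

end Aux



/-- combinatorial form of Proposition 4.1 for `GL_n`: a character
`χ` of the monoid `C` of antidominant coweights with values in a field `k` is given by a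
unique pair `(J, c)` of a subset `J` of the simple roots and a group homomorphism
`c : L_J → kˣ` (encoded as a function on `ℤⁿ` multiplicative on `L_J`, unique on `L_J`):
`χ = c` on `C ∩ L_J` and `χ = 0` on `C ∖ L_J`. -/
theorem statement19 (k : Type*) [Field k] (n : ℕ) (hn : 1 ≤ n)
    (χ : (Fin n → ℤ) → k) (h0 : χ 0 = 1)
    (hmul : ∀ lam mu : Fin n → ℤ, Monotone lam → Monotone mu →
      χ (lam + mu) = χ lam * χ mu) :
    ∃ J : Finset ℕ, J ⊆ Finset.range (n - 1) ∧
      ∃ c : (Fin n → ℤ) → kˣ,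
        (∀ lam mu : Fin n → ℤ, lam ∈ LJ n J → mu ∈ LJ n J →
          c (lam + mu) = c lam * c mu) ∧
        (∀ lam : Fin n → ℤ, Monotone lam → lam ∈ LJ n J → χ lam = (c lam : k)) ∧
        (∀ lam : Fin n → ℤ, Monotone lam → lam ∉ LJ n J → χ lam = 0) ∧
        ∀ (J' : Finset ℕ) (c' : (Fin n → ℤ) → kˣ),
          J' ⊆ Finset.range (n - 1) →
          (∀ lam mu : Fin n → ℤ, lam ∈ LJ n J' → mu ∈ LJ n J' →
            c' (lam + mu) = c' lam * c' mu) →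
          (∀ lam : Fin n → ℤ, Monotone lam → lam ∈ LJ n J' → χ lam = (c' lam : k)) →
          (∀ lam : Fin n → ℤ, Monotone lam → lam ∉ LJ n J' → χ lam = 0) →
          J' = J ∧ ∀ lam ∈ LJ n J, c' lam = c lam := by
  classical
  -- the unit χ(1,…,1)
  have huv : χ (fun _ : Fin n => (1:ℤ)) * χ (fun _ : Fin n => (-1:ℤ)) = 1 := by
    rw [← hmul _ _ monotone_const monotone_const]
    have : ((fun _ : Fin n => (1:ℤ)) + fun _ => -1) = 0 := by funext i; simp
    rw [this, h0]
  set u : kˣ := ⟨χ (fun _ => 1), χ (fun _ => -1), huv, by rw [mul_comm]; exact huv⟩ with hudef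
  have hu1 : (u : k) = χ (fun _ => 1) := rfl
  set J : Finset ℕ := (range (n-1)).filter (fun j => χ (gg n j) = 0) with hJdef
  have hJsub : J ⊆ range (n-1) := filter_subset _ _
  set w : ℕ → kˣ := fun j => if h : χ (gg n j) = 0 then 1 else Units.mk0 _ h with hwdef
  set C : (Fin n → ℤ) → kˣ :=
    fun lam => u ^ (lam (FF n hn 0)) * ∏ j ∈ range (n-1), w j ^ (DD n hn lam j) with hCdef
  have hCmul : ∀ lam mu : Fin n → ℤ,
      C (lam + mu) = C lam * C mu := by
    intro lam mu
    simp only [hCdef, Pi.add_apply]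
    have hDadd : ∀ j, DD n hn (lam + mu) j = DD n hn lam j + DD n hn mu j := by
      intro j; simp only [DD, Pi.add_apply]; ring
    simp_rw [hDadd, zpow_add, prod_mul_distrib]
    exact mul_mul_mul_comm _ _ _ _
  have hmatch : ∀ lam : Fin n → ℤ, Monotone lam → lam ∈ LJ n J → χ lam = (C lam : k) := by
    intro lam hlam hmem
    rw [chi_formula hn χ h0 hmul u hu1 lam hlam]
    simp only [hCdef, Units.val_mul]
    congr 1
    rw [show ((∏ j ∈ range (n-1), w j ^ DD n hn lam j : kˣ) : k)
        = ∏ j ∈ range (n-1), ((w j ^ DD n hn lam j : kˣ) : k) from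
      map_prod (Units.coeHom k) _ _]
    refine prod_congr rfl fun j hj => ?_
    have hj1 : j < n - 1 := mem_range.mp hj
    by_cases hz : χ (gg n j) = 0
    · -- j ∈ J, so DD = 0
      have hjJ : j ∈ J := mem_filter.mpr ⟨hj, hz⟩
      have hD0 : DD n hn lam j = 0 := by
        have := hmem ⟨j, by omega⟩ ⟨j+1, by omega⟩ (by simpa using hjJ) rfl
        simp only [DD, FF_eq hn (show j < n by omega), FF_eq hn (show j+1 < n by omega), this]
        ring
      rw [hD0]
      simp
    · have hw : w j = Units.mk0 _ hz := by simp [hwdef, hz]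
      rw [hw]
      simp only [Units.coeHom_apply, Units.val_zpow_eq_zpow_val, Units.val_mk0]
      rw [← Int.toNat_of_nonneg (DD_nonneg hn hlam j), zpow_natCast, Int.toNat_natCast]
  have hzero : ∀ lam : Fin n → ℤ, Monotone lam → lam ∉ LJ n J → χ lam = 0 := by
    intro lam hlam hnot
    rw [chi_formula hn χ h0 hmul u hu1 lam hlam]
    simp only [LJ, Set.mem_setOf_eq, not_forall] at hnot
    obtain ⟨j, j', hjJ, hj', hne⟩ := hnot
    obtain ⟨hjr, hjz⟩ := mem_filter.mp hjJ
    have hj1 : (j:ℕ) < n - 1 := mem_range.mp hjr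
    have hFj : FF n hn (j:ℕ) = j := by
      rw [FF_eq hn (by omega)]
    have hFj' : FF n hn ((j:ℕ)+1) = j' := by
      rw [FF_eq hn (by omega)]
      exact (Fin.ext hj'.symm)
    have hDpos : 0 < DD n hn lam (j:ℕ) := by
      have hle : lam j ≤ lam j' := hlam (by rw [Fin.le_def]; omega)
      have : lam j ≠ lam j' := hne
      simp only [DD, hFj, hFj']
      omega
    apply mul_eq_zero_of_right
    refine Finset.prod_eq_zero hjr ?_
    rw [hjz, zero_pow]
    omega
  refine ⟨J, hJsub, C, fun lam mu _ _ => hCmul lam mu, hmatch, hzero, ?_⟩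
  intro J' c' hJ'sub hc'mul hc'match hc'zero
  have hJ'J : J' = J := by
    ext j
    constructor
    · intro hjJ'
      have hjr := hJ'sub hjJ'
      have hj1 := mem_range.mp hjr
      have hnot : gg n j ∉ LJ n J' := by
        intro hmem
        have h1 := hmem ⟨j, by omega⟩ ⟨j+1, by omega⟩ (by simpa using hjJ') rfl
        simp [gg] at h1
      have := hc'zero (gg n j) (gg_mono n j) hnot
      exact mem_filter.mpr ⟨hjr, this⟩
    · intro hjJ
      obtain ⟨hjr, hjz⟩ := mem_filter.mp hjJ
      by_contra hjJ'
      have hmem : gg n j ∈ LJ n J' := by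
        intro j₁ j₂ h₁ h₂
        have hne : (j₁:ℕ) ≠ j := by rintro h; exact hjJ' (h ▸ h₁)
        simp only [gg]
        split_ifs <;> omega
      have h2 := hc'match (gg n j) (gg_mono n j) hmem
      rw [h2] at hjz
      exact Units.ne_zero _ hjz
  subst hJ'J
  refine ⟨rfl, ?_⟩
  intro lam hlamLJ
  set t : ℕ → ℤ := fun m => (((range m).filter (fun j => j ∉ J)).card : ℤ) with htdef
  have htmono : ∀ a b : ℕ, a ≤ b → t a ≤ t b := by
    intro a b h
    simp only [htdef, Nat.cast_le]
    exact card_le_card (filter_subset_filter _ (range_subset_range.mpr h))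
  have htJ : ∀ m ∈ J, t (m+1) = t m := by
    intro m hm
    simp [htdef, range_add_one, filter_insert, hm]
  have htNJ : ∀ m, m ∉ J → t (m+1) = t m + 1 := by
    intro m hm
    simp only [htdef, range_add_one, filter_insert, hm, not_false_iff, if_true]
    rw [card_insert_of_notMem (by simp)]
    push_cast
    ring
  set M : ℤ := ∑ j ∈ range (n-1), |DD n hn lam j| with hMdef
  have hM0 : 0 ≤ M := sum_nonneg fun j _ => abs_nonneg _
  have hMj : ∀ j ∈ range (n-1), -(DD n hn lam j) ≤ M := by
    intro j hj
    rw [hMdef]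
    exact le_trans (neg_le_abs _)
      (single_le_sum (f := fun j => |DD n hn lam j|) (fun i _ => abs_nonneg _) hj)
  set nu : Fin n → ℤ := fun i => M * t (i:ℕ) with hnudef
  have hnuLJ : nu ∈ LJ n J := by
    intro j₁ j₂ h₁ h₂
    simp only [hnudef]
    rw [show ((j₂:ℕ)) = (j₁:ℕ)+1 from h₂, htJ _ h₁]
  have hnumono : Monotone nu := by
    intro a b hab
    simp only [hnudef]
    exact mul_le_mul_of_nonneg_left (htmono _ _ hab) hM0
  have hsummem : lam + nu ∈ LJ n J := by
    intro j₁ j₂ h₁ h₂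
    simp only [Pi.add_apply]
    rw [hlamLJ j₁ j₂ h₁ h₂, hnuLJ j₁ j₂ h₁ h₂]
  have hsum_mono : Monotone (lam + nu) := by
    apply mono_of_adj hn
    intro m hm
    simp only [Pi.add_apply, hnudef]
    by_cases hmJ : m ∈ J
    · have he : lam ⟨m, by omega⟩ = lam ⟨m+1, hm⟩ :=
        hlamLJ ⟨m, by omega⟩ ⟨m+1, hm⟩ (by simpa using hmJ) rfl
      rw [he, htJ m hmJ]
    · have h1 := htNJ m hmJ
      have hmr : m ∈ range (n-1) := mem_range.mpr (by omega)
      have h2 := hMj m hmr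
      have h3 : DD n hn lam m = lam ⟨m+1, hm⟩ - lam ⟨m, by omega⟩ := by
        simp [DD, FF_eq hn (show m < n by omega), FF_eq hn hm]
      rw [h1]
      have h4 : M * (t m + 1) = M * t m + M := by ring
      rw [h4]
      omega
  have e1 : χ (lam + nu) = (c' (lam + nu) : k) := hc'match _ hsum_mono hsummem
  have e2 : χ (lam + nu) = (C (lam + nu) : k) := hmatch _ hsum_mono hsummem
  have e3 : χ nu = (c' nu : k) := hc'match _ hnumono hnuLJ
  have e4 : χ nu = (C nu : k) := hmatch _ hnumono hnuLJ
  have enu : c' nu = C nu := Units.ext (by rw [← e3, ← e4])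
  have eadd : c' lam * c' nu = C lam * C nu := by
    apply Units.ext
    rw [show ((c' lam * c' nu : kˣ) : k) = ((c' (lam + nu) : kˣ) : k) from by
        rw [hc'mul lam nu hlamLJ hnuLJ],
      show ((C lam * C nu : kˣ) : k) = ((C (lam + nu) : kˣ) : k) from by
        rw [hCmul lam nu],
      ← e1, ← e2]
  rw [enu] at eadd
  exact mul_right_cancel eadd
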